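/- Assume m > 1 and let z₀ > 0. Let U₁, U₂ : [z₀,∞) → [0,∞) be continuous functions such that for each i and every z ≥ z₀ the function ρ ↦ K(z,ρ)·U_i(ρ) is Lebesgue integrable on (z,∞) and U_i(z)^m = ∫_z^∞ K(z,ρ)·U_i(ρ) dρ. If there exists λ > 0 such that λ·U₁(z) ≤ U₂(z) for all z ≥ z₀, then U₁(z) ≤ U₂(z) for all z ≥ z₀. -/

import Mathlib

open MeasureTheory Set Filter

/-- The kernel profile `Q(η) = (1/Γ(1-α)) ∫_η^1 (1-σ^{1/b})^{-α} σ^{1-d} dσ` for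
`η ∈ (0,1)`; for `η ≥ 1` the interval `(η,1)` is empty, so `Q(η) = 0`. -/
noncomputable def Qker (d : ℕ) (α b : ℝ) (η : ℝ) : ℝ :=
  (1 / Real.Gamma (1 - α)) *
    ∫ σ in Set.Ioo η 1, (1 - σ ^ (1 / b)) ^ (-α) * σ ^ (1 - (d:ℝ))

/-- The kernel `K(z,ρ) = ρ·Q(z/ρ)`. -/
noncomputable def Kker (d : ℕ) (α b : ℝ) (z ρ : ℝ) : ℝ := ρ * Qker d α b (z / ρ)

lemma Qker_nonneg (d : ℕ) (α b : ℝ) (hα : α ∈ Set.Ioo (0:ℝ) 1) (hb : 0 < b)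
    (η : ℝ) (hη : 0 ≤ η) : 0 ≤ Qker d α b η := by
  have hΓ : 0 < Real.Gamma (1 - α) := Real.Gamma_pos_of_pos (by linarith [hα.2])
  unfold Qker
  apply mul_nonneg (by positivity)
  apply setIntegral_nonneg measurableSet_Ioo
  intro σ hσ
  have h0 : 0 < σ := lt_of_le_of_lt hη hσ.1
  have h1 : σ ^ (1 / b) < 1 := Real.rpow_lt_one h0.le hσ.2 (by positivity)
  have h2 : 0 < 1 - σ ^ (1 / b) := by linarith
  positivity

lemma Kker_nonneg (d : ℕ) (α b : ℝ) (hα : α ∈ Set.Ioo (0:ℝ) 1) (hb : 0 < b)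
    (z ρ : ℝ) (hz : 0 ≤ z) (hρ : 0 < ρ) : 0 ≤ Kker d α b z ρ := by
  exact mul_nonneg hρ.le (Qker_nonneg d α b hα hb _ (by positivity))

/-- comparison by homogeneity in the slow-diffusion range `m > 1`. If two
continuous nonnegative solutions on `[z₀,∞)` satisfy `λ·U₁ ≤ U₂` for some `λ > 0`, then
`U₁ ≤ U₂` on `[z₀,∞)`. -/
theorem comparison_by_homogeneity (d : ℕ) (hd : 1 ≤ d) (α m b : ℝ)
    (hα : α ∈ Set.Ioo (0:ℝ) 1)
    (hm : 1 < m)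
    (hb : b = α / (2 + (d:ℝ) * (m - 1)))
    (z₀ : ℝ) (hz₀ : 0 < z₀)
    (U₁ U₂ : ℝ → ℝ)
    (hc₁ : ContinuousOn U₁ (Set.Ici z₀)) (hc₂ : ContinuousOn U₂ (Set.Ici z₀))
    (hpos₁ : ∀ z, z₀ ≤ z → 0 ≤ U₁ z) (hpos₂ : ∀ z, z₀ ≤ z → 0 ≤ U₂ z)
    (hsol₁ : ∀ z, z₀ ≤ z →
      MeasureTheory.IntegrableOn (fun ρ => Kker d α b z ρ * U₁ ρ) (Set.Ioi z) ∧
      U₁ z ^ m = ∫ ρ in Set.Ioi z, Kker d α b z ρ * U₁ ρ)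
    (hsol₂ : ∀ z, z₀ ≤ z →
      MeasureTheory.IntegrableOn (fun ρ => Kker d α b z ρ * U₂ ρ) (Set.Ioi z) ∧
      U₂ z ^ m = ∫ ρ in Set.Ioi z, Kker d α b z ρ * U₂ ρ)
    (hlam : ∃ lam : ℝ, 0 < lam ∧ ∀ z, z₀ ≤ z → lam * U₁ z ≤ U₂ z) :
    ∀ z, z₀ ≤ z → U₁ z ≤ U₂ z := by
  obtain ⟨lam, hlam0, hlamle⟩ := hlam
  have hm0 : (0 : ℝ) < m := by linarith
  have hbpos : 0 < b := by
    rw [hb]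
    have h1 : (0:ℝ) ≤ (d:ℝ) * (m - 1) := mul_nonneg (Nat.cast_nonneg d) (by linarith)
    have : (0:ℝ) < 2 + (d:ℝ) * (m - 1) := by linarith
    exact div_pos hα.1 this
  -- the improvement step
  have key : ∀ μ : ℝ, 0 < μ → (∀ z, z₀ ≤ z → μ * U₁ z ≤ U₂ z) →
      ∀ z, z₀ ≤ z → μ ^ (1 / m) * U₁ z ≤ U₂ z := by
    intro μ hμ hU z hz
    have hmono : μ * U₁ z ^ m ≤ U₂ z ^ m := by
      rw [(hsol₁ z hz).2, (hsol₂ z hz).2, ← integral_const_mul]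
      apply setIntegral_mono_on ((hsol₁ z hz).1.const_mul μ) (hsol₂ z hz).1
        measurableSet_Ioi
      intro ρ hρ
      have hρ' : z < ρ := hρ
      have hρz : z₀ ≤ ρ := le_trans hz hρ'.le
      have hK : 0 ≤ Kker d α b z ρ :=
        Kker_nonneg d α b hα hbpos z ρ (by linarith) (by linarith)
      calc μ * (Kker d α b z ρ * U₁ ρ) = Kker d α b z ρ * (μ * U₁ ρ) := by ring
        _ ≤ Kker d α b z ρ * U₂ ρ :=
            mul_le_mul_of_nonneg_left (hU ρ hρz) hK
    have ha : 0 ≤ μ ^ (1 / m) * U₁ z :=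
      mul_nonneg (Real.rpow_nonneg hμ.le _) (hpos₁ z hz)
    have hb2 : 0 ≤ U₂ z := hpos₂ z hz
    have hpow : (μ ^ (1 / m) * U₁ z) ^ m ≤ U₂ z ^ m := by
      rw [Real.mul_rpow (Real.rpow_nonneg hμ.le _) (hpos₁ z hz),
        ← Real.rpow_mul hμ.le, one_div, inv_mul_cancel₀ hm0.ne', Real.rpow_one]
      exact hmono
    by_contra h
    push_neg at h
    have := Real.rpow_lt_rpow hb2 h hm0
    linarith
  set lam' : ℝ := min lam 1 with hlam'
  have hlam'0 : 0 < lam' := lt_min hlam0 one_pos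
  have hlam'1 : lam' ≤ 1 := min_le_right _ _
  have iter : ∀ n : ℕ, ∀ z, z₀ ≤ z → lam' ^ ((1 / m) ^ n : ℝ) * U₁ z ≤ U₂ z := by
    intro n
    induction n with
    | zero =>
      intro z hz
      rw [pow_zero, Real.rpow_one]
      calc lam' * U₁ z ≤ lam * U₁ z :=
            mul_le_mul_of_nonneg_right (min_le_left _ _) (hpos₁ z hz)
        _ ≤ U₂ z := hlamle z hz
    | succ n ih =>
      intro z hz
      have h := key (lam' ^ ((1 / m) ^ n : ℝ))
        (Real.rpow_pos_of_pos hlam'0 _) ih z hz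
      rw [pow_succ, Real.rpow_mul hlam'0.le]
      exact h
  intro z hz
  have htend0 : Tendsto (fun n : ℕ => ((1 / m) ^ n : ℝ)) atTop (nhds 0) :=
    tendsto_pow_atTop_nhds_zero_of_lt_one (by positivity)
      (by rw [div_lt_one hm0]; linarith)
  have hcont : ContinuousAt (fun t : ℝ => lam' ^ t) 0 :=
    Real.continuousAt_const_rpow hlam'0.ne'
  have htend : Tendsto (fun n : ℕ => lam' ^ ((1 / m) ^ n : ℝ)) atTop (nhds 1) := by
    have := hcont.tendsto.comp htend0
    simpa [Real.rpow_zero, Function.comp_def] using this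
  have htend2 : Tendsto (fun n : ℕ => lam' ^ ((1 / m) ^ n : ℝ) * U₁ z) atTop
      (nhds (1 * U₁ z)) := htend.mul_const _
  have := le_of_tendsto htend2 (Filter.Eventually.of_forall fun n => iter n z hz)
  linarith [this]
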